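/- Let A and B be contractions on complex Hilbert spaces H_A and H_B. If A ∼ B (that is, there exist a linear isometry Ω : H_A → H_B whose range reduces B and satisfies Ω∘A = B∘Ω, and a linear isometry Ω' : H_B → H_A whose range reduces A and satisfies Ω'∘B = A∘Ω'), then A and B are unitarily equivalent, i.e., there is a unitary operator W : H_A → H_B with W∘A = B∘W. -/

import Mathlib

open ContinuousLinearMap

local notation "⟪" x ", " y "⟫" => @inner ℂ _ _ x y

/-- If `V` is a linear isometry intertwining `A` with `B` whose range is invariant under
`adjoint B`, then `V` also intertwines `adjoint A` with `adjoint B`. -/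
private lemma adj_comm
    {H K : Type*} [NormedAddCommGroup H] [InnerProductSpace ℂ H] [CompleteSpace H]
    [NormedAddCommGroup K] [InnerProductSpace ℂ K] [CompleteSpace K]
    (A : H →L[ℂ] H) (B : K →L[ℂ] K) (V : H →ₗᵢ[ℂ] K)
    (hV : ∀ x, V (A x) = B (V x))
    (hr : ∀ y ∈ Set.range ⇑V, adjoint B y ∈ Set.range ⇑V) :
    ∀ x, V (adjoint A x) = adjoint B (V x) := by
  intro x
  obtain ⟨z, hz⟩ := hr (V x) ⟨x, rfl⟩
  have hz' : adjoint A x = z := by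
    apply ext_inner_right ℂ
    intro w
    calc ⟪adjoint A x, w⟫ = ⟪x, A w⟫ := adjoint_inner_left ..
    _ = ⟪V x, V (A w)⟫ := (V.inner_map_map ..).symm
    _ = ⟪V x, B (V w)⟫ := by rw [hV]
    _ = ⟪adjoint B (V x), V w⟫ := (adjoint_inner_left ..).symm
    _ = ⟪V z, V w⟫ := by rw [hz]
    _ = ⟪z, w⟫ := V.inner_map_map ..
  rw [hz', hz]

/-- If `A ∼ B` (each is unitarily equivalent to the restriction of the other to a reducing
subspace), then `A` and `B` are unitarily equivalent. -/
theorem stmt_0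
    {HA HB : Type*}
    [NormedAddCommGroup HA] [InnerProductSpace ℂ HA] [CompleteSpace HA]
    [NormedAddCommGroup HB] [InnerProductSpace ℂ HB] [CompleteSpace HB]
    (A : HA →L[ℂ] HA) (B : HB →L[ℂ] HB)
    (hA : ‖A‖ ≤ 1) (hB : ‖B‖ ≤ 1)
    (Ω : HA →ₗᵢ[ℂ] HB) (Ω' : HB →ₗᵢ[ℂ] HA)
    (hΩ : ∀ x, Ω (A x) = B (Ω x))
    (hΩ' : ∀ y, Ω' (B y) = A (Ω' y))
    (hred : ∀ y ∈ Set.range ⇑Ω, B y ∈ Set.range ⇑Ω ∧ adjoint B y ∈ Set.range ⇑Ω)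
    (hred' : ∀ x ∈ Set.range ⇑Ω', A x ∈ Set.range ⇑Ω' ∧ adjoint A x ∈ Set.range ⇑Ω') :
    ∃ W : HA ≃ₗᵢ[ℂ] HB, ∀ x, W (A x) = B (W x) := by
  classical
  -- ψ = Ω' ∘ Ω, an isometry of `HA` commuting with `A` and `adjoint A`.
  set ψ : HA →ₗᵢ[ℂ] HA := Ω'.comp Ω with hψdef
  have hψapp : ∀ x, ψ x = Ω' (Ω x) := fun _ => rfl
  have hψA : ∀ x, ψ (A x) = A (ψ x) := by
    intro x; rw [hψapp, hψapp, hΩ, hΩ']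
  have hΩadj : ∀ x, Ω (adjoint A x) = adjoint B (Ω x) :=
    adj_comm A B Ω hΩ (fun y hy => (hred y hy).2)
  have hΩ'adj : ∀ y, Ω' (adjoint B y) = adjoint A (Ω' y) :=
    adj_comm B A Ω' hΩ' (fun x hx => (hred' x hx).2)
  have hψA' : ∀ x, ψ (adjoint A x) = adjoint A (ψ x) := by
    intro x; rw [hψapp, hψapp, hΩadj, hΩ'adj]
  -- N = range Ω', a closed subspace of HA reducing A.
  set N : Submodule ℂ HA := LinearMap.range Ω'.toLinearMap with hNdef
  have hNmem : ∀ {x : HA}, x ∈ N ↔ ∃ y, Ω' y = x := by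
    intro x; simp [hNdef, LinearMap.mem_range]
  have hNrange : ∀ {x : HA}, x ∈ N ↔ x ∈ Set.range ⇑Ω' := by
    intro x; rw [hNmem]; exact Iff.rfl
  have hNcomplete : IsComplete (N : Set HA) := by
    have h1 : IsComplete (Set.range ⇑Ω') :=
      (completeSpace_iff_isComplete_range
        Ω'.isometry.isUniformEmbedding.toIsUniformInducing).1 ‹_›
    have h2 : (N : Set HA) = Set.range ⇑Ω' := by
      ext x; exact hNrange
    rwa [h2]
  haveI : CompleteSpace ↥N := hNcomplete.completeSpace_coe
  have hAN : ∀ z ∈ N, A z ∈ N := by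
    intro z hz; exact hNrange.2 ((hred' z (hNrange.1 hz)).1)
  have hA'N : ∀ z ∈ N, adjoint A z ∈ N := by
    intro z hz; exact hNrange.2 ((hred' z (hNrange.1 hz)).2)
  -- C0 = orthogonal complement of N; it is also invariant under A and adjoint A.
  set C0 : Submodule ℂ HA := Nᗮ with hC0def
  have hC0N : C0ᗮ = N := N.orthogonal_orthogonal
  have hAC0 : ∀ z ∈ C0, A z ∈ C0 := by
    intro z hz
    rw [hC0def, Submodule.mem_orthogonal] at hz ⊢
    intro u hu
    rw [← adjoint_inner_left]
    exact hz _ (hA'N u hu)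
  have hA'C0 : ∀ z ∈ C0, adjoint A z ∈ C0 := by
    intro z hz
    rw [hC0def, Submodule.mem_orthogonal] at hz ⊢
    intro u hu
    rw [adjoint_inner_right]
    exact hz _ (hAN u hu)
  -- S = span of all ψ^n C0, E = its closure.
  set ψl : HA →ₗ[ℂ] HA := ψ.toLinearMap with hψldef
  have hψlapp : ∀ x, ψl x = ψ x := fun _ => rfl
  set S : Submodule ℂ HA := ⨆ n : ℕ, C0.map (ψl ^ n) with hSdef
  have hmap0 : C0.map (ψl ^ 0) = C0 := by
    rw [pow_zero, Module.End.one_eq_id, Submodule.map_id]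
  have hC0S : C0 ≤ S := by
    have h := le_iSup (fun n : ℕ => C0.map (ψl ^ n)) 0
    rw [hmap0] at h
    exact h
  have hmapψS : S.map ψl = ⨆ n : ℕ, C0.map (ψl ^ (n + 1)) := by
    rw [hSdef, Submodule.map_iSup]
    congr 1
    funext n
    rw [← Submodule.map_comp, ← Module.End.mul_eq_comp, ← pow_succ']
  have hψS : S.map ψl ≤ S := by
    rw [hmapψS]
    exact iSup_le fun n => le_iSup (fun n : ℕ => C0.map (ψl ^ n)) (n + 1)
  have hsplit : S ≤ C0 ⊔ S.map ψl := by
    rw [hSdef]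
    refine iSup_le fun n => ?_
    cases n with
    | zero => rw [hmap0]; exact le_sup_left
    | succ n =>
      refine le_trans ?_ le_sup_right
      rw [hmapψS]
      exact le_iSup (fun n : ℕ => C0.map (ψl ^ (n + 1))) n
  -- S is invariant under A and adjoint A.
  have hcommA : ∀ (n : ℕ) (x : HA), (ψl ^ n) (A x) = A ((ψl ^ n) x) := by
    intro n
    induction n with
    | zero => intro x; simp
    | succ n ih =>
      intro x
      rw [pow_succ, Module.End.mul_apply, Module.End.mul_apply, hψlapp, hψlapp, ← ih, ← hψA]
  have hcommA' : ∀ (n : ℕ) (x : HA), (ψl ^ n) (adjoint A x) = adjoint A ((ψl ^ n) x) := by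
    intro n
    induction n with
    | zero => intro x; simp
    | succ n ih =>
      intro x
      rw [pow_succ, Module.End.mul_apply, Module.End.mul_apply, hψlapp, hψlapp, ← ih, ← hψA']
  have hmapS : ∀ (f : HA →ₗ[ℂ] HA), (∀ n x, (ψl ^ n) (f x) = f ((ψl ^ n) x)) →
      (∀ z ∈ C0, f z ∈ C0) → S.map f ≤ S := by
    intro f hcomm hC0
    rw [hSdef, Submodule.map_iSup]
    refine iSup_le fun n => ?_
    have h1 : (C0.map (ψl ^ n)).map f = (C0.map f).map (ψl ^ n) := by
      rw [← Submodule.map_comp, ← Submodule.map_comp]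
      congr 1
      exact LinearMap.ext fun x => (hcomm n x).symm
    rw [h1]
    refine le_trans (Submodule.map_mono ?_) (le_iSup (fun n : ℕ => C0.map (ψl ^ n)) n)
    intro z hz
    obtain ⟨w, hw, rfl⟩ := hz
    exact hC0 w hw
  have hAS : S.map (A : HA →ₗ[ℂ] HA) ≤ S := hmapS _ (fun n x => hcommA n x) hAC0
  have hA'S : S.map (adjoint A : HA →ₗ[ℂ] HA) ≤ S := hmapS _ (fun n x => hcommA' n x) hA'C0
  set E : Submodule ℂ HA := S.topologicalClosure with hEdef
  have hSE : S ≤ E := Submodule.le_topologicalClosure S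
  haveI : CompleteSpace ↥E := S.isClosed_topologicalClosure.completeSpace_coe
  have hEmem : ∀ {x : HA}, x ∈ E ↔ x ∈ closure (S : Set HA) := by
    intro x
    rw [← SetLike.mem_coe, hEdef, Submodule.topologicalClosure_coe]
  have hstable : ∀ (f : HA →L[ℂ] HA), (∀ z ∈ S, f z ∈ S) → ∀ x ∈ E, f x ∈ E := by
    intro f hf x hx
    rw [hEmem] at hx ⊢
    exact map_mem_closure f.continuous hx hf
  have hAE : ∀ x ∈ E, A x ∈ E := by
    refine hstable A fun z hz => ?_
    exact hAS ⟨z, hz, rfl⟩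
  have hA'E : ∀ x ∈ E, adjoint A x ∈ E := by
    refine hstable (adjoint A) fun z hz => ?_
    exact hA'S ⟨z, hz, rfl⟩
  have hψE : ∀ x ∈ E, ψ x ∈ E := by
    refine hstable ψ.toContinuousLinearMap fun z hz => ?_
    exact hψS ⟨z, hz, rfl⟩
  -- F = ψ(E), a closed subspace.
  set F : Submodule ℂ HA := E.map ψl with hFdef
  have hFset : (F : Set HA) = ⇑ψ '' (E : Set HA) := by
    ext x
    simp [hFdef, Submodule.mem_map, hψlapp, Set.mem_image, SetLike.mem_coe]
  have hFcomplete : IsComplete (F : Set HA) := by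
    rw [hFset]
    exact ψ.isometry.isUniformEmbedding.isComplete_iff.2
      (S.isClosed_topologicalClosure.isComplete)
  have hFclosed : IsClosed (F : Set HA) := hFcomplete.isClosed
  -- The orthogonal projection onto E.
  set Q : HA →L[ℂ] HA := E.subtypeL.comp (E.orthogonalProjectionOnto) with hQdef
  have hQapp : ∀ x, Q x = (E.orthogonalProjectionOnto x : HA) := fun _ => rfl
  have hQmem : ∀ x, Q x ∈ E := fun x => (E.orthogonalProjectionOnto x).2
  have hQsub : ∀ x, x - Q x ∈ Eᗮ := fun x => Submodule.sub_starProjection_mem_orthogonal x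
  have hQself : ∀ x ∈ E, Q x = x := by
    intro x hx
    rw [hQapp]
    exact Submodule.starProjection_eq_self_iff.2 hx
  have hQzero : ∀ x ∈ Eᗮ, Q x = 0 := by
    intro x hx
    rw [hQapp, Submodule.orthogonalProjectionOnto_apply_of_mem_orthogonal hx,
      Submodule.coe_zero]
  -- The projection commutes with A.
  have hQA : ∀ x, Q (A x) = A (Q x) := by
    intro x
    rw [hQapp]
    refine Submodule.eq_starProjection_of_mem_orthogonal (hAE _ (hQmem x)) ?_
    have h1 : A x - A (Q x) = A (x - Q x) := by rw [map_sub]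
    rw [h1, Submodule.mem_orthogonal]
    intro u hu
    rw [← adjoint_inner_left]
    exact (Submodule.mem_orthogonal _ _).1 (hQsub x) _ (hA'E u hu)
  -- The isometry U : x ↦ ψ (Q x) + (x - Q x).
  set U : HA →L[ℂ] HA := ψ.toContinuousLinearMap.comp Q + (ContinuousLinearMap.id ℂ HA - Q)
    with hUdef
  have hUapp : ∀ x, U x = ψ (Q x) + (x - Q x) := fun _ => rfl
  have hUnorm : ∀ x, ‖U x‖ = ‖x‖ := by
    intro x
    have h1 : ⟪ψ (Q x), x - Q x⟫ = 0 :=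
      (Submodule.mem_orthogonal _ _).1 (hQsub x) _ (hψE _ (hQmem x))
    have h2 : ⟪Q x, x - Q x⟫ = 0 :=
      (Submodule.mem_orthogonal _ _).1 (hQsub x) _ (hQmem x)
    have h3 : ‖U x‖ * ‖U x‖ = ‖ψ (Q x)‖ * ‖ψ (Q x)‖ + ‖x - Q x‖ * ‖x - Q x‖ := by
      rw [hUapp]
      exact norm_add_sq_eq_norm_sq_add_norm_sq_of_inner_eq_zero _ _ h1
    have h4 : ‖x‖ * ‖x‖ = ‖Q x‖ * ‖Q x‖ + ‖x - Q x‖ * ‖x - Q x‖ := by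
      have h6 := norm_add_sq_eq_norm_sq_add_norm_sq_of_inner_eq_zero _ _ h2
      have h5 : Q x + (x - Q x) = x := by abel
      rwa [h5] at h6
    rw [ψ.norm_map] at h3
    nlinarith [norm_nonneg (U x), norm_nonneg x, h3, h4]
  -- U intertwines A with itself.
  have hUA : ∀ x, U (A x) = A (U x) := by
    intro x
    rw [hUapp, hUapp, hQA, hψA, map_add, map_sub]
  -- Range of U is contained in N.
  have hC0E : C0 ≤ E := le_trans hC0S hSE
  have hEC0 : Eᗮ ≤ C0ᗮ := Submodule.orthogonal_le hC0E
  have hUN : ∀ x, U x ∈ N := by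
    intro x
    rw [hUapp]
    refine N.add_mem ?_ ?_
    · rw [hψapp]
      exact hNmem.2 ⟨Ω (Q x), rfl⟩
    · rw [← hC0N]
      exact hEC0 (hQsub x)
  -- Key surjectivity lemma: elements of E orthogonal to C0 lie in ψ(E).
  haveI : Submodule.HasOrthogonalProjection C0 := by
    rw [hC0def]; infer_instance
  have keysurj : ∀ z ∈ E, z ∈ C0ᗮ → z ∈ F := by
    intro z hzE hzC0
    set R : HA →L[ℂ] HA :=
      ContinuousLinearMap.id ℂ HA - C0.subtypeL.comp (C0.orthogonalProjectionOnto) with hRdef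
    have hRapp : ∀ x, R x = x - (C0.orthogonalProjectionOnto x : HA) := fun _ => rfl
    have hRS : Set.MapsTo ⇑R (S : Set HA) (F : Set HA) := by
      intro s hs
      obtain ⟨c, hc, m, hm, hcm⟩ := Submodule.mem_sup.1 (hsplit hs)
      have hmC0 : m ∈ C0ᗮ := by
        rw [hC0N]
        obtain ⟨s', _, rfl⟩ := hm
        rw [hψlapp, hψapp]
        exact hNmem.2 ⟨Ω s', rfl⟩
      have hproj : (C0.orthogonalProjectionOnto s : HA) = c := by
        refine Submodule.eq_starProjection_of_mem_orthogonal hc ?_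
        have : s - c = m := by rw [← hcm]; abel
        rw [this]
        exact hmC0
      have hRs : R s = m := by
        rw [hRapp, hproj, ← hcm]; abel
      rw [SetLike.mem_coe, hRs]
      exact Submodule.map_mono hSE hm
    have hz1 : R z ∈ (F : Set HA) := by
      have h1 : z ∈ closure (S : Set HA) := hEmem.1 hzE
      have h2 := map_mem_closure R.continuous h1 hRS
      rwa [hFclosed.closure_eq] at h2
    have hz2 : R z = z := by
      rw [hRapp, Submodule.orthogonalProjectionOnto_apply_of_mem_orthogonal hzC0,
        Submodule.coe_zero, sub_zero]
    rwa [← hz2]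
  -- U maps onto N.
  have hNU : ∀ y ∈ N, ∃ x, U x = y := by
    intro y hy
    have h1 : y - Q y ∈ Eᗮ := hQsub y
    have h2 : Q y ∈ C0ᗮ := by
      have hyC : y ∈ C0ᗮ := hC0N ▸ hy
      have h3 : y - Q y ∈ C0ᗮ := hEC0 h1
      have h4 := Submodule.sub_mem _ hyC h3
      simpa using h4
    obtain ⟨e, heE, hee⟩ := keysurj (Q y) (hQmem y) h2
    rw [hψlapp] at hee
    refine ⟨e + (y - Q y), ?_⟩
    have hQe : Q (e + (y - Q y)) = e := by
      rw [map_add, hQself e heE, hQzero _ h1, add_zero]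
    rw [hUapp, hQe, hee]
    abel
  -- Define g : HA → HB with Ω' (g x) = U x; it is a surjective isometry intertwining A and B.
  have hex : ∀ x : HA, ∃ b : HB, Ω' b = U x := fun x => hNmem.1 (hUN x)
  choose g hg using hex
  have hginj : Function.Injective ⇑Ω' := Ω'.injective
  have hgadd : ∀ x y, g (x + y) = g x + g y := by
    intro x y
    apply hginj
    rw [hg, map_add, map_add, hg, hg]
  have hgsmul : ∀ (c : ℂ) (x : HA), g (c • x) = c • g x := by
    intro c x
    apply hginj
    rw [hg, map_smul, map_smul, hg]
  have hgnorm : ∀ x, ‖g x‖ = ‖x‖ := by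
    intro x
    rw [← Ω'.norm_map (g x), hg, hUnorm]
  have hgA : ∀ x, g (A x) = B (g x) := by
    intro x
    apply hginj
    rw [hg, hUA, ← hg, hΩ']
  have hgsurj : Function.Surjective g := by
    intro b
    obtain ⟨x, hx⟩ := hNU (Ω' b) (hNmem.2 ⟨b, rfl⟩)
    refine ⟨x, hginj ?_⟩
    rw [hg, hx]
  set G : HA →ₗᵢ[ℂ] HB :=
    { toFun := g
      map_add' := hgadd
      map_smul' := hgsmul
      norm_map' := hgnorm } with hGdef
  refine ⟨LinearIsometryEquiv.ofSurjective G hgsurj, fun x => ?_⟩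
  rw [LinearIsometryEquiv.coe_ofSurjective]
  exact hgA x
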